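/- Let F be a field of characteristic different from 2, and let q_1,…,q_n be nonzero elements of F that are pairwise distinct and satisfy q_i q_j ≠ 1 for all i ≠ j; let χ_1,…,χ_n ∈ F and ħ ∈ F. Let M(χ) be the 2n×2n matrix over F whose entries are: for 1 ≤ i,j ≤ n, the (i,j) entry is χ_i if i = j and ħ/(1 − q_i/q_j) if i ≠ j; the (i, n+j) entry is ħ/(1 − q_i q_{n+1−j}) if i + j ≠ n+1 and 0 if i + j = n+1; the (n+i, j) entry is ħ/(1 − q_{n+1−i}^{−1} q_j^{−1}) if i + j ≠ n+1 and 0 if i + j = n+1; and the (n+i, n+j) entry is −χ_{n+1−i} if i = j and ħ/(1 − q_{n+1−j}/q_{n+1−i}) if i ≠ j. Let A(χ) be the n×n matrix with A(χ)_{ii} = χ_i and A(χ)_{ij} = ħ(1 − q_i)(1 + q_j)/((1 − q_i/q_j)(1 − q_i q_j)) for i ≠ j, and A(−χ) the same matrix with each χ_i replaced by −χ_i. Define the 2n×2n matrices L and R in n×n blocks by: L has top-left block the identity I_n, top-right block the antidiagonal matrix with (i, n+1−i) entry −q_i^{−1}, bottom-left block the diagonal matrix diag(−q_1,…,−q_n),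 and bottom-right block the antidiagonal matrix with (i, n+1−i) entry −1; R has top-left block I_n, top-right block diag(q_1^{−1},…,q_n^{−1}), bottom-left block the antidiagonal matrix with (i, n+1−i) entry q_{n+1−i}, and bottom-right block the antidiagonal matrix with (i, n+1−i) entry −1. Then (1/2)·L·M(χ)·R equals the block diagonal matrix with top-left block A(χ) and bottom-right block the transpose of A(−χ). -/

import Mathlib

private lemma sum_rev_ite {M : Type*} [AddCommMonoid M] {n : ℕ} (b : Fin n) (f : Fin n → M) :
    (∑ x, if b = x.rev then f x else 0) = f b.rev := by
  rw [Finset.sum_eq_single b.rev]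
  · simp
  · intro x _ hx
    rw [if_neg]
    intro h
    exact hx (by rw [h, Fin.rev_rev])
  · simp

set_option maxHeartbeats 2000000 in
/-- Over a field `F` of characteristic `≠ 2`, with `q i` nonzero,
pairwise distinct and `q i * q j ≠ 1` for `i ≠ j`: for the `2n × 2n` matrix `M(χ)`
(written in `n × n` blocks, `Fin.rev` playing the role of `i ↦ n + 1 - i`), and the
explicit block matrices `L` and `R` below, one has
`(1/2) • (L * M(χ) * R) = fromBlocks (A(χ)) 0 0 (A(-χ))ᵀ`. -/
theorem half_L_M_R_eq_blockDiagonal {F : Type*} [Field F] (h2 : (2 : F) ≠ 0)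
    (n : ℕ) (q χ : Fin n → F) (ℏ : F)
    (hq0 : ∀ i, q i ≠ 0) (hq : Function.Injective q)
    (hq1 : ∀ i j, i ≠ j → q i * q j ≠ 1)
    (M : Matrix (Fin n ⊕ Fin n) (Fin n ⊕ Fin n) F)
    (hM : M = Matrix.fromBlocks
      (Matrix.of fun i j : Fin n =>
        if i = j then χ i else ℏ / (1 - q i / q j))
      (Matrix.of fun i j : Fin n =>
        if j = Fin.rev i then 0 else ℏ / (1 - q i * q (Fin.rev j)))
      (Matrix.of fun i j : Fin n =>
        if j = Fin.rev i then 0 else ℏ / (1 - (q (Fin.rev i))⁻¹ * (q j)⁻¹))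
      (Matrix.of fun i j : Fin n =>
        if i = j then -χ (Fin.rev i) else ℏ / (1 - q (Fin.rev j) / q (Fin.rev i))))
    (L : Matrix (Fin n ⊕ Fin n) (Fin n ⊕ Fin n) F)
    (hL : L = Matrix.fromBlocks
      (1 : Matrix (Fin n) (Fin n) F)
      (Matrix.of fun i j : Fin n => if j = Fin.rev i then -(q i)⁻¹ else 0)
      (Matrix.diagonal fun i => -q i)
      (Matrix.of fun i j : Fin n => if j = Fin.rev i then -1 else 0))
    (R : Matrix (Fin n ⊕ Fin n) (Fin n ⊕ Fin n) F)
    (hR : R = Matrix.fromBlocks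
      (1 : Matrix (Fin n) (Fin n) F)
      (Matrix.diagonal fun i => (q i)⁻¹)
      (Matrix.of fun i j : Fin n => if j = Fin.rev i then q (Fin.rev i) else 0)
      (Matrix.of fun i j : Fin n => if j = Fin.rev i then -1 else 0))
    (A A' : Matrix (Fin n) (Fin n) F)
    (hA : A = Matrix.of fun i j : Fin n =>
      if i = j then χ i
      else ℏ * (1 - q i) * (1 + q j) / ((1 - q i / q j) * (1 - q i * q j)))
    (hA' : A' = Matrix.of fun i j : Fin n =>
      if i = j then -χ i
      else ℏ * (1 - q i) * (1 + q j) / ((1 - q i / q j) * (1 - q i * q j))) :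
    (1 / 2 : F) • (L * M * R) = Matrix.fromBlocks A 0 0 A'.transpose := by
  subst hM hL hR hA hA'
  ext a b
  obtain a | a := a <;> obtain b | b := b <;>
    simp only [Matrix.smul_apply, Matrix.mul_apply, Matrix.fromBlocks_apply₁₁,
      Matrix.fromBlocks_apply₁₂, Matrix.fromBlocks_apply₂₁, Matrix.fromBlocks_apply₂₂,
      Fintype.sum_sum_type, Matrix.of_apply, Matrix.one_apply, Matrix.diagonal_apply,
      Matrix.transpose_apply, Matrix.zero_apply, Fin.rev_rev, Fin.rev_inj,
      ite_mul, mul_ite, zero_mul, mul_zero, Finset.sum_ite_eq, Finset.sum_ite_eq',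
      Finset.mem_univ, if_true, Finset.sum_add_distrib, one_mul, neg_mul, mul_neg, neg_neg] <;>
    rw [sum_rev_ite] <;>
    simp only [Fin.rev_rev, Fin.rev_inj, smul_eq_mul] <;>
    rcases eq_or_ne a b with rfl | hab
  · have hx : q a * (q a)⁻¹ = 1 := mul_inv_cancel₀ (hq0 a)
    simp only [if_pos rfl, eq_self_iff_true, if_true, ↓reduceIte]
    field_simp [hq0 a]
    try ring
  · have hne : q a ≠ q b := fun h => hab (hq h)
    have d1 : 1 - q a / q b ≠ 0 :=
      sub_ne_zero_of_ne fun h => hne ((div_eq_one_iff_eq (hq0 b)).mp h.symm)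
    have d2 : 1 - q b / q a ≠ 0 :=
      sub_ne_zero_of_ne fun h => hne.symm ((div_eq_one_iff_eq (hq0 a)).mp h.symm)
    have d3 : 1 - q a * q b ≠ 0 := sub_ne_zero_of_ne fun h => hq1 a b hab h.symm
    have d3' : 1 - q b * q a ≠ 0 := by rwa [mul_comm] at d3
    have d4 : 1 - (q a)⁻¹ * (q b)⁻¹ ≠ 0 := by
      rw [← mul_inv]
      exact sub_ne_zero_of_ne fun h =>
        hq1 a b hab (inv_eq_one.mp h.symm)
    have ha := hq0 a
    have hb := hq0 b
    have hsub : q b - q a ≠ 0 := sub_ne_zero_of_ne hne.symm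
    have hsub' : q a - q b ≠ 0 := sub_ne_zero_of_ne hne
    have hm1 : q a * q b - 1 ≠ 0 := sub_ne_zero_of_ne (hq1 a b hab)
    have hm1' : q b * q a - 1 ≠ 0 := by rwa [mul_comm] at hm1
    have e1 : 1 - q a / q b = (q b - q a) / q b := by field_simp
    have e2 : 1 - q b / q a = (q a - q b) / q a := by field_simp
    have e4 : 1 - (q a)⁻¹ * (q b)⁻¹ = (q a * q b - 1) / (q a * q b) := by
      field_simp
    simp only [if_neg hab, if_neg (Ne.symm hab), e1, e2, e4]
    field_simp
    try rw [div_eq_iff (by simp only [ne_eq, mul_eq_zero, not_or]; tauto)]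
    try ring
    try exact Or.inl trivial
  · have hx : q a * (q a)⁻¹ = 1 := mul_inv_cancel₀ (hq0 a)
    simp only [if_pos rfl, eq_self_iff_true, if_true, ↓reduceIte]
    field_simp [hq0 a]
    try ring
  · have hne : q a ≠ q b := fun h => hab (hq h)
    have d1 : 1 - q a / q b ≠ 0 :=
      sub_ne_zero_of_ne fun h => hne ((div_eq_one_iff_eq (hq0 b)).mp h.symm)
    have d2 : 1 - q b / q a ≠ 0 :=
      sub_ne_zero_of_ne fun h => hne.symm ((div_eq_one_iff_eq (hq0 a)).mp h.symm)
    have d3 : 1 - q a * q b ≠ 0 := sub_ne_zero_of_ne fun h => hq1 a b hab h.symm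
    have d3' : 1 - q b * q a ≠ 0 := by rwa [mul_comm] at d3
    have d4 : 1 - (q a)⁻¹ * (q b)⁻¹ ≠ 0 := by
      rw [← mul_inv]
      exact sub_ne_zero_of_ne fun h =>
        hq1 a b hab (inv_eq_one.mp h.symm)
    have ha := hq0 a
    have hb := hq0 b
    have hsub : q b - q a ≠ 0 := sub_ne_zero_of_ne hne.symm
    have hsub' : q a - q b ≠ 0 := sub_ne_zero_of_ne hne
    have hm1 : q a * q b - 1 ≠ 0 := sub_ne_zero_of_ne (hq1 a b hab)
    have hm1' : q b * q a - 1 ≠ 0 := by rwa [mul_comm] at hm1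
    have e1 : 1 - q a / q b = (q b - q a) / q b := by field_simp
    have e2 : 1 - q b / q a = (q a - q b) / q a := by field_simp
    have e4 : 1 - (q a)⁻¹ * (q b)⁻¹ = (q a * q b - 1) / (q a * q b) := by
      field_simp
    simp only [if_neg hab, if_neg (Ne.symm hab), e1, e2, e4]
    field_simp
    try rw [div_eq_iff (by simp only [ne_eq, mul_eq_zero, not_or]; tauto)]
    try ring
    try exact Or.inl trivial
  · have hx : q a * (q a)⁻¹ = 1 := mul_inv_cancel₀ (hq0 a)
    simp only [if_pos rfl, eq_self_iff_true, if_true, ↓reduceIte]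
    field_simp [hq0 a]
    try ring
  · have hne : q a ≠ q b := fun h => hab (hq h)
    have d1 : 1 - q a / q b ≠ 0 :=
      sub_ne_zero_of_ne fun h => hne ((div_eq_one_iff_eq (hq0 b)).mp h.symm)
    have d2 : 1 - q b / q a ≠ 0 :=
      sub_ne_zero_of_ne fun h => hne.symm ((div_eq_one_iff_eq (hq0 a)).mp h.symm)
    have d3 : 1 - q a * q b ≠ 0 := sub_ne_zero_of_ne fun h => hq1 a b hab h.symm
    have d3' : 1 - q b * q a ≠ 0 := by rwa [mul_comm] at d3
    have d4 : 1 - (q a)⁻¹ * (q b)⁻¹ ≠ 0 := by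
      rw [← mul_inv]
      exact sub_ne_zero_of_ne fun h =>
        hq1 a b hab (inv_eq_one.mp h.symm)
    have ha := hq0 a
    have hb := hq0 b
    have hsub : q b - q a ≠ 0 := sub_ne_zero_of_ne hne.symm
    have hsub' : q a - q b ≠ 0 := sub_ne_zero_of_ne hne
    have hm1 : q a * q b - 1 ≠ 0 := sub_ne_zero_of_ne (hq1 a b hab)
    have hm1' : q b * q a - 1 ≠ 0 := by rwa [mul_comm] at hm1
    have e1 : 1 - q a / q b = (q b - q a) / q b := by field_simp
    have e2 : 1 - q b / q a = (q a - q b) / q a := by field_simp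
    have e4 : 1 - (q a)⁻¹ * (q b)⁻¹ = (q a * q b - 1) / (q a * q b) := by
      field_simp
    simp only [if_neg hab, if_neg (Ne.symm hab), e1, e2, e4]
    field_simp
    try rw [div_eq_iff (by simp only [ne_eq, mul_eq_zero, not_or]; tauto)]
    try ring
    try exact Or.inl trivial
  · have hx : q a * (q a)⁻¹ = 1 := mul_inv_cancel₀ (hq0 a)
    simp only [if_pos rfl, eq_self_iff_true, if_true, ↓reduceIte]
    field_simp [hq0 a]
    try ring
  · have hne : q a ≠ q b := fun h => hab (hq h)
    have d1 : 1 - q a / q b ≠ 0 :=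
      sub_ne_zero_of_ne fun h => hne ((div_eq_one_iff_eq (hq0 b)).mp h.symm)
    have d2 : 1 - q b / q a ≠ 0 :=
      sub_ne_zero_of_ne fun h => hne.symm ((div_eq_one_iff_eq (hq0 a)).mp h.symm)
    have d3 : 1 - q a * q b ≠ 0 := sub_ne_zero_of_ne fun h => hq1 a b hab h.symm
    have d3' : 1 - q b * q a ≠ 0 := by rwa [mul_comm] at d3
    have d4 : 1 - (q a)⁻¹ * (q b)⁻¹ ≠ 0 := by
      rw [← mul_inv]
      exact sub_ne_zero_of_ne fun h =>
        hq1 a b hab (inv_eq_one.mp h.symm)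
    have ha := hq0 a
    have hb := hq0 b
    have hsub : q b - q a ≠ 0 := sub_ne_zero_of_ne hne.symm
    have hsub' : q a - q b ≠ 0 := sub_ne_zero_of_ne hne
    have hm1 : q a * q b - 1 ≠ 0 := sub_ne_zero_of_ne (hq1 a b hab)
    have hm1' : q b * q a - 1 ≠ 0 := by rwa [mul_comm] at hm1
    have e1 : 1 - q a / q b = (q b - q a) / q b := by field_simp
    have e2 : 1 - q b / q a = (q a - q b) / q a := by field_simp
    have e4 : 1 - (q a)⁻¹ * (q b)⁻¹ = (q a * q b - 1) / (q a * q b) := by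
      field_simp
    simp only [if_neg hab, if_neg (Ne.symm hab), e1, e2, e4]
    field_simp
    try rw [div_eq_iff (by simp only [ne_eq, mul_eq_zero, not_or]; tauto)]
    try ring
    try exact Or.inl trivial
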